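/- arXiv:1609.03276 — 5 statements merged into one kernel-verified Lean document; each statement's English description precedes it below -/
import Mathlib

section
/- Let R be a commutative ring and let f and g be formal power series over R such that the constant coefficient of f is 0. Then for every natural number n, n! times the n-th coefficient of the substitution subst f g (i.e. of g(f(z))) equals the sum, over all partitions π of the finite set Fin n into nonempty blocks, of ((number of blocks of π)! times the (number of blocks of π)-th coefficient of g) multiplied by the product, over the blocks B of π, of ((card B)! times the (card B)-th coefficient of f). (This is the classical Faà di Bruno formula, the case of the paper's Main Theorem for the terminal reduced operad Comm₊.) -/
open Finset

/-- Substitution of one formal power series into another: `subst f g` is `g(f(z))`.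
This coefficientwise definition agrees with the usual substitution whenever the
constant coefficient of `f` is `0` (so that `f ^ k` has order at least `k`). -/
noncomputable def PowerSeries.subst' {R : Type*} [CommRing R]
    (f g : PowerSeries R) : PowerSeries R :=
  PowerSeries.mk fun n =>
    ∑ k ∈ Finset.range (n + 1), PowerSeries.coeff k g * PowerSeries.coeff n (f ^ k)

namespace FaaAux

variable {α ι : Type*}

/-- The fiber of `Sigma.fst` over `i` is equivalent to `β i`. -/
def fiberFstEquiv {β : ι → Type*} (i : ι) : {p : Σ j, β j // p.1 = i} ≃ β i where
  toFun := fun ⟨⟨_, b⟩, h⟩ => h ▸ b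
  invFun b := ⟨⟨i, b⟩, rfl⟩
  left_inv := by rintro ⟨⟨j, b⟩, rfl⟩; rfl
  right_inv b := rfl

/-- An equivalence `α ≃ Σ i, β i` is the same as a function `σ : α → ι` together with
equivalences from the fibers of `σ` to the `β i`. -/
def grandEquiv {β : ι → Type*} :
    (α ≃ Σ i, β i) ≃ Σ σ : α → ι, ∀ i, {x // σ x = i} ≃ β i where
  toFun e := ⟨fun x => (e x).1,
    fun i => (e.subtypeEquiv fun _ => Iff.rfl).trans (fiberFstEquiv i)⟩
  invFun s := (Equiv.sigmaFiberEquiv s.1).symm.trans (Equiv.sigmaCongrRight s.2)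
  left_inv e := Equiv.ext fun x => rfl
  right_inv := by
    rintro ⟨σ, F⟩
    refine Sigma.ext rfl (heq_of_eq ?_)
    funext i
    apply Equiv.ext
    rintro ⟨x, h⟩
    subst h
    rfl

lemma card_equiv_fin (γ : Type*) [Fintype γ] [DecidableEq γ] (m : ℕ) :
    Fintype.card (γ ≃ Fin m) = if Fintype.card γ = m then m.factorial else 0 := by
  split_ifs with h
  · rw [Fintype.card_equiv (Fintype.equivOfCardEq (by simp [h])), h]
  · have : IsEmpty (γ ≃ Fin m) := ⟨fun e => h (by simpa using Fintype.card_congr e)⟩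
    exact Fintype.card_eq_zero

end FaaAux

namespace FaaAux

/-- The number of functions `Fin n → Fin k` with prescribed fiber sizes, weighted:
`n ! = ∑_σ ∏_i (if |σ⁻¹ i| = c i then (c i)! else 0)` when `∑ c = n`. -/
lemma count_lemma {n k : ℕ} (c : Fin k → ℕ) (h : ∑ i, c i = n) :
    ∑ σ : Fin n → Fin k, ∏ i,
      (if (univ.filter fun x => σ x = i).card = c i then (c i).factorial else 0) =
      n.factorial := by
  have h1 : Fintype.card (Fin n ≃ Σ i, Fin (c i)) = n.factorial := by
    rw [Fintype.card_equiv (Fintype.equivOfCardEq (by simp [h]))]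
    simp
  rw [← h1, Fintype.card_congr (grandEquiv), Fintype.card_sigma]
  refine Finset.sum_congr rfl fun σ _ => ?_
  rw [Fintype.card_pi]
  refine Finset.prod_congr rfl fun i _ => ?_
  rw [card_equiv_fin, Fintype.card_subtype]

lemma coeff_pow_tuple {R : Type*} [CommRing R] (f : PowerSeries R) (k n : ℕ) :
    PowerSeries.coeff n (f ^ k) =
      ∑ c ∈ Finset.Nat.antidiagonalTuple k n, ∏ i, PowerSeries.coeff (c i) f := by
  rw [PowerSeries.coeff_pow]
  refine Finset.sum_nbij' (i := fun l (i : Fin k) => l i.val)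
    (j := fun c => Finsupp.onFinset (range k) (fun j => if h : j < k then c ⟨j, h⟩ else 0)
      (fun j hj => Finset.mem_range.mpr (by by_contra hk; simp [hk] at hj)))
    ?_ ?_ ?_ ?_ ?_
  · intro l hl
    rw [Finset.mem_finsuppAntidiag] at hl
    rw [Finset.Nat.mem_antidiagonalTuple]
    rw [← hl.1]
    exact Fin.sum_univ_eq_sum_range _ _
  · intro c hc
    rw [Finset.Nat.mem_antidiagonalTuple] at hc
    rw [Finset.mem_finsuppAntidiag]
    constructor
    · rw [← Fin.sum_univ_eq_sum_range]
      simpa using hc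
    · exact Finsupp.support_onFinset_subset
  · intro l hl
    rw [Finset.mem_finsuppAntidiag] at hl
    ext j
    simp only [Finsupp.onFinset_apply]
    split_ifs with hj
    · rfl
    · symm
      by_contra hne
      exact hj (Finset.mem_range.mp (hl.2 (Finsupp.mem_support_iff.mpr hne)))
  · intro c _
    funext i
    simp [Fin.is_lt]
  · intro l _
    rw [← Fin.prod_univ_eq_prod_range]

/-- The fiber of `σ` over `i`, as a `Finset`. -/
abbrev fib {n k : ℕ} (σ : Fin n → Fin k) (i : Fin k) : Finset (Fin n) :=
  univ.filter fun x => σ x = i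

lemma sum_card_fib {n k : ℕ} (σ : Fin n → Fin k) : ∑ i, (fib σ i).card = n := by
  rw [← Finset.card_eq_sum_card_fiberwise (fun x _ => mem_univ (σ x))]
  simp

lemma claimA {R : Type*} [CommRing R] (f : PowerSeries R) (n k : ℕ) :
    (n.factorial : R) * PowerSeries.coeff n (f ^ k) =
      ∑ σ : Fin n → Fin k, ∏ i,
        (((fib σ i).card.factorial : R) * PowerSeries.coeff (fib σ i).card f) := by
  rw [coeff_pow_tuple, Finset.mul_sum]
  have key : ∀ c ∈ Finset.Nat.antidiagonalTuple k n,
      (n.factorial : R) * ∏ i, PowerSeries.coeff (c i) f =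
      ∑ σ : Fin n → Fin k, ∏ i,
        ((if (fib σ i).card = c i then ((c i).factorial : R) else 0) *
          PowerSeries.coeff (c i) f) := by
    intro c hc
    rw [Finset.Nat.mem_antidiagonalTuple] at hc
    have := count_lemma c hc
    have hcast : (n.factorial : R) = ∑ σ : Fin n → Fin k, ∏ i,
        (if (fib σ i).card = c i then ((c i).factorial : R) else 0) := by
      rw [← this]
      push_cast
      rfl
    rw [hcast, Finset.sum_mul]
    exact Finset.sum_congr rfl fun σ _ => (Finset.prod_mul_distrib).symm
  rw [Finset.sum_congr rfl key, Finset.sum_comm]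
  refine Finset.sum_congr rfl fun σ _ => ?_
  rw [Finset.sum_eq_single (fun i => (fib σ i).card)]
  · exact Finset.prod_congr rfl fun i _ => by rw [if_pos rfl]
  · intro c _ hne
    obtain ⟨i, hi⟩ := Function.ne_iff.mp hne
    exact Finset.prod_eq_zero (mem_univ i) (by rw [if_neg (fun hh => hi hh.symm), zero_mul])
  · intro hb
    exact absurd (Finset.Nat.mem_antidiagonalTuple.mpr (sum_card_fib σ)) hb

/-- The setoid on `Fin n` induced by a function `σ`. -/
def kerSetoid {n k : ℕ} (σ : Fin n → Fin k) : Setoid (Fin n) :=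
  ⟨fun x y => σ x = σ y, ⟨fun _ => rfl, Eq.symm, Eq.trans⟩⟩

instance {n k : ℕ} (σ : Fin n → Fin k) : DecidableRel (kerSetoid σ).r :=
  fun a b => inferInstanceAs (Decidable (σ a = σ b))

/-- The partition of `Fin n` into the (nonempty) fibers of `σ`. -/
def fpart {n k : ℕ} (σ : Fin n → Fin k) : Finpartition (univ : Finset (Fin n)) :=
  Finpartition.ofSetoid (kerSetoid σ)

lemma fpart_part {n k : ℕ} (σ : Fin n → Fin k) (a : Fin n) :
    (fpart σ).part a = fib σ (σ a) := by
  ext b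
  rw [fpart, Finpartition.mem_part_ofSetoid_iff_rel]
  simp [kerSetoid, eq_comm]
  exact Iff.rfl

lemma mem_fpart_parts {n k : ℕ} (σ : Fin n → Fin k) (B : Finset (Fin n)) :
    B ∈ (fpart σ).parts ↔ ∃ a, fib σ (σ a) = B := by
  constructor
  · intro hB
    obtain ⟨a, ha⟩ := (fpart σ).nonempty_of_mem_parts hB
    exact ⟨a, by rw [← fpart_part]; exact (fpart σ).part_eq_of_mem hB ha⟩
  · rintro ⟨a, rfl⟩
    rw [← fpart_part]
    exact (fpart σ).part_mem.mpr (mem_univ a)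

lemma fib_injective {n k : ℕ} {σ : Fin n → Fin k} (hs : Function.Surjective σ) :
    Function.Injective (fib σ) := by
  intro i j hij
  obtain ⟨x, rfl⟩ := hs i
  have hx : x ∈ fib σ (σ x) := by simp
  rw [hij] at hx
  exact (Finset.mem_filter.mp hx).2

lemma fpart_parts_card {n k : ℕ} {σ : Fin n → Fin k} (hs : Function.Surjective σ) :
    (fpart σ).parts.card = k := by
  have : (fpart σ).parts = univ.image (fib σ) := by
    ext B
    rw [mem_fpart_parts, Finset.mem_image]
    constructor
    · rintro ⟨a, rfl⟩; exact ⟨σ a, mem_univ _, rfl⟩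
    · rintro ⟨i, _, rfl⟩
      obtain ⟨a, rfl⟩ := hs i
      exact ⟨a, rfl⟩
  rw [this, Finset.card_image_of_injective _ (fib_injective hs), card_univ, Fintype.card_fin]

lemma fib_mem_parts {n k : ℕ} {σ : Fin n → Fin k} (hs : Function.Surjective σ) (i : Fin k) :
    fib σ i ∈ (fpart σ).parts := by
  obtain ⟨a, rfl⟩ := hs i
  exact (mem_fpart_parts σ _).mpr ⟨a, rfl⟩

variable {n k : ℕ}

/-- The function induced by an enumeration of the parts of `π`. -/
def σinv (π : Finpartition (univ : Finset (Fin n))) (e : Fin k ≃ {B // B ∈ π.parts}) :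
    Fin n → Fin k :=
  fun x => e.symm ⟨π.part x, π.part_mem.mpr (mem_univ x)⟩

lemma fib_σinv (π : Finpartition (univ : Finset (Fin n))) (e : Fin k ≃ {B // B ∈ π.parts})
    (i : Fin k) : fib (σinv π e) i = (e i).1 := by
  ext x
  rw [Finset.mem_filter]
  simp only [mem_univ, true_and, σinv, Equiv.symm_apply_eq]
  rw [Subtype.ext_iff]
  constructor
  · intro h; exact h ▸ π.mem_part (mem_univ x)
  · intro h; exact π.part_eq_of_mem (e i).2 h

lemma σinv_surjective (π : Finpartition (univ : Finset (Fin n)))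
    (e : Fin k ≃ {B // B ∈ π.parts}) : Function.Surjective (σinv π e) := by
  intro i
  obtain ⟨a, ha⟩ := π.nonempty_of_mem_parts (e i).2
  refine ⟨a, ?_⟩
  have h : π.part a = (e i).1 := π.part_eq_of_mem (e i).2 ha
  simp only [σinv, Equiv.symm_apply_eq]
  exact Subtype.ext h
  
lemma fpart_σinv (π : Finpartition (univ : Finset (Fin n)))
    (e : Fin k ≃ {B // B ∈ π.parts}) : fpart (σinv π e) = π := by
  apply Finpartition.ext
  ext B
  rw [mem_fpart_parts]
  constructor
  · rintro ⟨a, rfl⟩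
    rw [fib_σinv]
    exact (e _).2
  · intro hB
    obtain ⟨a, ha⟩ := σinv_surjective π e (e.symm ⟨B, hB⟩)
    refine ⟨a, ?_⟩
    rw [ha, fib_σinv]
    simp

/-- Surjections with fiber partition `π` correspond to enumerations of the parts of `π`. -/
noncomputable def surjEquiv (π : Finpartition (univ : Finset (Fin n))) :
    {σ : Fin n → Fin k // Function.Surjective σ ∧ fpart σ = π} ≃
      (Fin k ≃ {B // B ∈ π.parts}) where
  toFun := fun ⟨σ, hs, hp⟩ => Equiv.ofBijective
    (fun i => ⟨fib σ i, by rw [← hp]; exact fib_mem_parts hs i⟩)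
    ⟨fun i j hij => fib_injective hs (congrArg Subtype.val hij),
     by
      rintro ⟨B, hB⟩
      have hB' : B ∈ (fpart σ).parts := by rw [hp]; exact hB
      obtain ⟨a, ha⟩ := (mem_fpart_parts σ B).mp hB'
      exact ⟨σ a, Subtype.ext ha⟩⟩
  invFun e := (⟨σinv π e, σinv_surjective π e, fpart_σinv π e⟩ :
    {σ : Fin n → Fin k // Function.Surjective σ ∧ fpart σ = π})
  left_inv := by
    rintro ⟨σ, hs, hp⟩
    apply Subtype.ext
    funext x
    simp only [σinv, Equiv.symm_apply_eq, Equiv.ofBijective_apply]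
    refine Subtype.ext ?_
    show π.part x = fib σ (σ x)
    rw [← hp, fpart_part]
  right_inv e := by
    apply Equiv.ext
    intro i
    apply Subtype.ext
    show fib (σinv π e) i = (e i).1
    exact fib_σinv π e i

lemma CL {R : Type*} [CommRing R] (f : PowerSeries R) (π : Finpartition (univ : Finset (Fin n))) :
    ∑ σ ∈ univ.filter (fun σ : Fin n → Fin k => Function.Surjective σ ∧ fpart σ = π),
        ∏ i, (((fib σ i).card.factorial : R) * PowerSeries.coeff (fib σ i).card f) =
      if π.parts.card = k then
        (k.factorial : R) *
          ∏ B ∈ π.parts, ((B.card.factorial : R) * PowerSeries.coeff B.card f)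
      else 0 := by
  split_ifs with h
  · have hval : ∀ σ ∈ univ.filter (fun σ : Fin n → Fin k =>
        Function.Surjective σ ∧ fpart σ = π),
        ∏ i, (((fib σ i).card.factorial : R) * PowerSeries.coeff (fib σ i).card f) =
        ∏ B ∈ π.parts, ((B.card.factorial : R) * PowerSeries.coeff B.card f) := by
      intro σ hσ
      rw [Finset.mem_filter] at hσ
      obtain ⟨-, hs, hp⟩ := hσ
      refine Finset.prod_nbij (fun i => fib σ i) ?_ ?_ ?_ ?_
      · intro i _; rw [← hp]; exact fib_mem_parts hs i
      · intro i _ j _ hij; exact fib_injective hs hij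
      · intro B hB
        obtain ⟨a, ha⟩ := (mem_fpart_parts σ B).mp (by rw [hp]; exact hB)
        exact ⟨σ a, by simp, ha⟩
      · intro i _; rfl
    rw [Finset.sum_congr rfl hval, Finset.sum_const]
    have hcard : (univ.filter (fun σ : Fin n → Fin k =>
        Function.Surjective σ ∧ fpart σ = π)).card = k.factorial := by
      rw [← Fintype.card_subtype, Fintype.card_congr (surjEquiv π),
        Fintype.card_equiv (Fintype.equivOfCardEq (by simp [h]))]
      simp
    rw [hcard, nsmul_eq_mul]
  · refine Finset.sum_eq_zero fun σ hσ => ?_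
    rw [Finset.mem_filter] at hσ
    exact absurd (hσ.2.2 ▸ fpart_parts_card hσ.2.1) h

end FaaAux

/-- The classical Faà di Bruno formula: `n!` times the `n`-th coefficient of `g(f(z))`
is the sum over all partitions `π` of `Fin n` (into nonempty blocks) of
`(#blocks π)! g_{#blocks π} · ∏_{B ∈ π} (card B)! f_{card B}`. -/
theorem faa_di_bruno_partitions {R : Type*} [CommRing R] (f g : PowerSeries R)
    (hf : PowerSeries.constantCoeff f = 0) (n : ℕ) :
    (n.factorial : R) * PowerSeries.coeff n (PowerSeries.subst' f g) =
      ∑ π : Finpartition (Finset.univ : Finset (Fin n)),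
        ((π.parts.card.factorial : R) * PowerSeries.coeff π.parts.card g) *
          ∏ B ∈ π.parts, ((B.card.factorial : R) * PowerSeries.coeff B.card f) := by
  classical
  have expand : (n.factorial : R) * PowerSeries.coeff n (PowerSeries.subst' f g) =
      ∑ k ∈ range (n + 1),
        PowerSeries.coeff k g * ((n.factorial : R) * PowerSeries.coeff n (f ^ k)) := by
    rw [PowerSeries.subst', PowerSeries.coeff_mk, Finset.mul_sum]
    exact Finset.sum_congr rfl fun k _ => by ring
  have step : ∀ k : ℕ,
      PowerSeries.coeff k g * ((n.factorial : R) * PowerSeries.coeff n (f ^ k)) =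
      ∑ π : Finpartition (univ : Finset (Fin n)),
        (if π.parts.card = k then
          PowerSeries.coeff k g * ((k.factorial : R) *
            ∏ B ∈ π.parts, ((B.card.factorial : R) * PowerSeries.coeff B.card f))
        else 0) := by
    intro k
    rw [FaaAux.claimA, Finset.mul_sum]
    have hsub : ∑ σ : Fin n → Fin k, PowerSeries.coeff k g *
          ∏ i, (((FaaAux.fib σ i).card.factorial : R) *
            PowerSeries.coeff (FaaAux.fib σ i).card f)
        = ∑ σ ∈ univ.filter (fun σ : Fin n → Fin k => Function.Surjective σ),
            PowerSeries.coeff k g *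
              ∏ i, (((FaaAux.fib σ i).card.factorial : R) *
                PowerSeries.coeff (FaaAux.fib σ i).card f) := by
      symm
      apply Finset.sum_filter_of_ne
      intro σ _ hne
      by_contra hns
      apply hne
      obtain ⟨i, hi⟩ := not_forall.mp hns
      have hfib : FaaAux.fib σ i = ∅ := by
        rw [Finset.filter_eq_empty_iff]
        intro x _
        exact fun hx => hi ⟨x, hx⟩
      rw [Finset.prod_eq_zero (Finset.mem_univ i), mul_zero]
      rw [hfib]
      simpa using hf
    rw [hsub,
      ← Finset.sum_fiberwise_of_maps_to (g := FaaAux.fpart) (fun σ _ => mem_univ _)]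
    refine Finset.sum_congr rfl fun π _ => ?_
    rw [Finset.filter_filter, ← Finset.mul_sum, FaaAux.CL, mul_ite, mul_zero]
  rw [expand, Finset.sum_congr rfl (fun k _ => step k), Finset.sum_comm]
  refine Finset.sum_congr rfl fun π _ => ?_
  rw [Finset.sum_ite_eq (range (n + 1)) π.parts.card
    (fun k => PowerSeries.coeff k g * ((k.factorial : R) *
      ∏ B ∈ π.parts, ((B.card.factorial : R) * PowerSeries.coeff B.card f))),
    if_pos (Finset.mem_range.mpr (Nat.lt_succ_of_le
      (le_trans π.card_parts_le_card (by simp))))]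
  ring
end

section
/- Let R be a commutative ring and let f and g be formal power series over R such that the constant coefficient of f is 0. Then for every natural number n, the n-th coefficient of subst f g (i.e. of g(f(z))) equals the sum, over all partitions p of the natural number n, of the integer multinomial coefficient k! / ∏_i (mᵢ!) — where k is the number of parts of p counted with multiplicity and mᵢ is the multiplicity of i as a part of p — times the k-th coefficient of g, times the product over the multiset of parts i of p (with multiplicity) of the i-th coefficient of f. (Faà di Bruno's formula in expanded Bell-polynomial form.) -/
open Finset

/-- Substitution of one formal power series into another: `subst f g` is `g(f(z))`.
This coefficientwise definition agrees with the usual substitution whenever the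
constant coefficient of `f` is `0` (so that `f ^ k` has order at least `k`). -/
noncomputable def PowerSeries.substCoeffwise {R : Type*} [CommRing R]
    (f g : PowerSeries R) : PowerSeries R :=
  PowerSeries.mk fun n =>
    ∑ k ∈ Finset.range (n + 1), PowerSeries.coeff k g * PowerSeries.coeff n (f ^ k)

lemma aux_card_le_sum (s : Multiset ℕ) (h : ∀ x ∈ s, 0 < x) : Multiset.card s ≤ s.sum := by
  induction s using Multiset.induction with
  | empty => simp
  | cons i s ih =>
    simp only [Multiset.card_cons, Multiset.sum_cons]
    have h1 : 0 < i := h i (Multiset.mem_cons_self i s)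
    have := ih (fun x hx => h x (Multiset.mem_cons_of_mem hx))
    omega

lemma aux_prod {R : Type*} [CommRing R] (a : ℕ → R) (s : Multiset ℕ) :
    (s.map fun i => PowerSeries.C (a i) * PowerSeries.X ^ i).prod =
      PowerSeries.C ((s.map a).prod) * PowerSeries.X ^ s.sum := by
  induction s using Multiset.induction with
  | empty => simp
  | cons i s ih =>
    simp only [Multiset.map_cons, Multiset.prod_cons, Multiset.sum_cons, ih, map_mul, pow_add]
    ring

lemma aux_multinomial (m : Multiset ℕ) :
    m.countPerms = Nat.multinomial m.toFinset (fun i => m.count i) := by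
  rw [Multiset.countPerms, Finsupp.multinomial_eq, Multiset.toFinsupp_support]
  exact Nat.multinomial_congr (fun a _ => Multiset.toFinsupp_apply m a)

/-- Faà di Bruno's formula in expanded Bell-polynomial form: the `n`-th coefficient of
`g(f(z))` is the sum over all partitions `p` of the natural number `n` of the
multinomial coefficient `k! / ∏ᵢ mᵢ!` (where `k` is the number of parts of `p` and `mᵢ`
is the multiplicity of `i` among the parts) times `g_k` times `∏` of `f_i` over the
parts `i` of `p` (with multiplicity). -/
theorem faa_di_bruno_nat_partitions {R : Type*} [CommRing R] (f g : PowerSeries R)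
    (hf : PowerSeries.constantCoeff f = 0) (n : ℕ) :
    PowerSeries.coeff n (PowerSeries.substCoeffwise f g) =
      ∑ p : n.Partition,
        ((Nat.multinomial p.parts.toFinset fun i => p.parts.count i : ℕ) : R) *
          PowerSeries.coeff p.parts.card g *
          (p.parts.map fun i => PowerSeries.coeff i f).prod := by
  classical
  set F : PowerSeries R := ∑ i ∈ Finset.Icc 1 n, PowerSeries.C (PowerSeries.coeff i f) *
      PowerSeries.X ^ i with hFdef
  have hcoeF : ∀ m, m ≤ n → PowerSeries.coeff m F = PowerSeries.coeff m f := by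
    intro m hm
    rw [hFdef, map_sum]
    simp only [PowerSeries.coeff_C_mul, PowerSeries.coeff_X_pow]
    by_cases h0 : m = 0
    · subst h0
      rw [Finset.sum_eq_zero, ← hf, PowerSeries.coeff_zero_eq_constantCoeff]
      intro i hi
      rw [Finset.mem_Icc] at hi
      rw [if_neg (by omega), mul_zero]
    · rw [Finset.sum_eq_single m]
      · simp
      · intro i _ hne
        rw [if_neg (fun h => hne h.symm), mul_zero]
      · intro hmem
        exact absurd (Finset.mem_Icc.mpr ⟨by omega, hm⟩) hmem
  have hpow : ∀ k, PowerSeries.coeff n (f ^ k) = PowerSeries.coeff n (F ^ k) := by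
    intro k
    have hdvd : (PowerSeries.X : PowerSeries R) ^ (n + 1) ∣ f - F := by
      rw [PowerSeries.X_pow_dvd_iff]
      intro m hm
      rw [map_sub, hcoeF m (by omega), sub_self]
    have h2 : (PowerSeries.X : PowerSeries R) ^ (n + 1) ∣ f ^ k - F ^ k :=
      dvd_trans hdvd (sub_dvd_pow_sub_pow f F k)
    have h3 := PowerSeries.X_pow_dvd_iff.mp h2 n (Nat.lt_succ_self n)
    rw [map_sub] at h3
    exact sub_eq_zero.mp h3
  calc PowerSeries.coeff n (PowerSeries.substCoeffwise f g)
      = ∑ k ∈ Finset.range (n + 1), ∑ m ∈ (Finset.Icc 1 n).sym k,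
          if m.val.sum = n then
            (m.val.countPerms : R) * PowerSeries.coeff k g *
              (m.val.map fun i => PowerSeries.coeff i f).prod
          else 0 := by
        rw [PowerSeries.substCoeffwise, PowerSeries.coeff_mk]
        refine Finset.sum_congr rfl fun k _ => ?_
        rw [hpow, hFdef, Finset.sum_pow, map_sum, Finset.mul_sum]
        refine Finset.sum_congr rfl fun m _ => ?_
        rw [aux_prod, ← map_natCast PowerSeries.C m.val.countPerms, ← mul_assoc,
          ← map_mul, PowerSeries.coeff_C_mul, PowerSeries.coeff_X_pow]
        by_cases h : m.val.sum = n
        · rw [if_pos h.symm, if_pos h]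
          ring
        · rw [if_neg (fun hn => h hn.symm), if_neg h, mul_zero, mul_zero]
    _ = ∑ p : n.Partition,
        ((Nat.multinomial p.parts.toFinset fun i => p.parts.count i : ℕ) : R) *
          PowerSeries.coeff p.parts.card g *
          (p.parts.map fun i => PowerSeries.coeff i f).prod := by
        rw [Finset.sum_sigma', ← Finset.sum_filter]
        refine Finset.sum_bij'
          (fun x hx => ?_)  -- i : sigma → partition
          (fun p _ => ⟨p.parts.card, ⟨p.parts, rfl⟩⟩)  -- j
          ?_ ?_ ?_ ?_ ?_
        · -- i
          rw [Finset.mem_filter, Finset.mem_sigma, Finset.mem_sym_iff] at hx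
          exact ⟨x.2.val, fun {i} hi => by
              have := hx.1.2 i hi
              rw [Finset.mem_Icc] at this
              omega,
            hx.2⟩
        · intro x hx
          exact Finset.mem_univ _
        · intro p _
          rw [Finset.mem_filter, Finset.mem_sigma, Finset.mem_sym_iff]
          refine ⟨⟨?_, ?_⟩, p.parts_sum⟩
          · show Multiset.card p.parts ∈ Finset.range (n + 1)
            rw [Finset.mem_range, Nat.lt_succ_iff]
            have h1 := aux_card_le_sum p.parts (fun x hx => p.parts_pos hx)
            have h2 := p.parts_sum
            omega
          · show ∀ a ∈ (⟨p.parts, rfl⟩ : Sym ℕ (Multiset.card p.parts)).val, a ∈ Finset.Icc 1 n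
            intro a ha
            rw [Finset.mem_Icc]
            refine ⟨p.parts_pos ha, ?_⟩
            have h1 := Multiset.single_le_sum (fun (x : ℕ) (_ : x ∈ p.parts) => Nat.zero_le x) a ha
            have h2 := p.parts_sum
            omega
        · intro x hx
          obtain ⟨k, m⟩ := x
          obtain ⟨ms, hms⟩ := m
          subst hms
          rfl
        · intro p _
          exact Nat.Partition.ext rfl
        · intro x hx
          rw [Finset.mem_filter, Finset.mem_sigma] at hx
          have hc : Multiset.card x.2.val = x.1 := x.2.2
          simp only []
          rw [aux_multinomial, hc]
end

section
/- Let R be a (possibly noncommutative) ring, let a : ℕ → R satisfy a(0) = 0, and let b : ℕ → R. Let f be the formal power series over R with n-th coefficient a(n). Then for every n ≥ 1, the n-th coefficient of the power series Σ_{k=0}^{n} C(b(k)) · f^k (where C embeds ring elements as constant power series) equals the sum, over all compositions (c₁,…,c_k) of n, of the ordered product b(k) · a(c₁) · a(c₂) ⋯ a(c_k). (This is the noncommutative Faà di Bruno formula of Brouder–Frabetti–Krattenthaler, arising from the paper's result applied to the terminal reduced nonsymmetric operad.) -/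
open Finset PowerSeries

lemma coeff_mk_pow_eq {R : Type*} [Ring R] (a : ℕ → R) (ha : a 0 = 0) (k n : ℕ) :
    PowerSeries.coeff n (PowerSeries.mk a ^ k) =
      ∑ c ∈ Finset.univ.filter (fun c : Composition n => c.length = k),
        (c.blocks.map a).prod := by
  induction k generalizing n with
  | zero =>
    have hblocks : ∀ c : Composition 0, c.blocks = [] := by
      intro c
      rcases hb : c.blocks with _ | ⟨d, t⟩
      · rfl
      · exfalso
        have hs := c.blocks_sum
        have hd : 0 < d := c.blocks_pos (by rw [hb]; exact List.mem_cons_self)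
        rw [hb] at hs
        simp at hs
        omega
    rcases Nat.eq_zero_or_pos n with rfl | hn
    · have : Finset.univ.filter (fun c : Composition 0 => c.length = 0) = Finset.univ := by
        apply Finset.filter_true_of_mem
        intro c _
        simp [Composition.length, hblocks c]
      have h1 : ∀ c : Composition 0, (List.map a c.blocks).prod = 1 := fun c => by
        rw [hblocks c]; simp
      rw [this]
      simp only [h1]
      have hcard : Fintype.card (Composition 0) = 1 := by
        rw [composition_card]; rfl
      simp [Finset.card_univ, hcard]
    · have : Finset.univ.filter (fun c : Composition n => c.length = 0) = ∅ := by
        apply Finset.filter_false_of_mem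
        intro c _
        have := c.length_pos_of_pos hn
        omega
      rw [this]
      simp [PowerSeries.coeff_one, Nat.pos_iff_ne_zero.mp hn]
  | succ k ih =>
    rw [pow_succ', PowerSeries.coeff_mul]
    simp only [coeff_mk, ih]
    rw [← Finset.sum_filter_of_ne (p := fun p : ℕ × ℕ => 0 < p.1)
      (by intro x hx h; by_contra hx1
          simp only [not_lt, Nat.le_zero] at hx1
          rw [hx1, ha, zero_mul] at h; exact h rfl)]
    simp only [Finset.mul_sum]
    rw [Finset.sum_sigma']
    refine Finset.sum_bij
      (i := fun x hx =>
        { blocks := x.1.1 :: x.2.blocks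
          blocks_pos := fun hi => by
            rcases List.mem_cons.mp hi with rfl | hi
            · exact (Finset.mem_filter.mp (Finset.mem_sigma.mp hx).1).2
            · exact x.2.blocks_pos hi
          blocks_sum := by
            have h1 := Finset.HasAntidiagonal.mem_antidiagonal.mp
              (Finset.mem_filter.mp (Finset.mem_sigma.mp hx).1).1
            simp only [List.sum_cons, x.2.blocks_sum]
            exact h1 }) ?_ ?_ ?_ ?_
    · -- maps into target
      intro x hx
      have h2 := (Finset.mem_filter.mp (Finset.mem_sigma.mp hx).2).2
      simp only [Finset.mem_filter, Finset.mem_univ, true_and]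
      simp [Composition.length, h2]
    · -- injective
      rintro ⟨⟨i₁, j₁⟩, c₁⟩ h₁ ⟨⟨i₂, j₂⟩, c₂⟩ h₂ heq
      have hb : i₁ :: c₁.blocks = i₂ :: c₂.blocks := congrArg Composition.blocks heq
      obtain ⟨rfl, hbl⟩ : i₁ = i₂ ∧ c₁.blocks = c₂.blocks := by
        exact ⟨List.head_eq_of_cons_eq hb, List.tail_eq_of_cons_eq hb⟩
      have hj : j₁ = j₂ := by
        have e1 := c₁.blocks_sum
        have e2 := c₂.blocks_sum
        rw [hbl] at e1
        exact e1.symm.trans e2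
      subst hj
      have : c₁ = c₂ := Composition.ext hbl
      subst this
      rfl
    · -- surjective
      intro c hc
      have hlen := (Finset.mem_filter.mp hc).2
      rcases hb : c.blocks with _ | ⟨d, t⟩
      · exfalso; simp [Composition.length, hb] at hlen
      have hd : 0 < d := c.blocks_pos (by rw [hb]; exact List.mem_cons_self)
      have ht : ∀ i ∈ t, 0 < i := fun i hi => c.blocks_pos (by rw [hb]; exact List.mem_cons_of_mem _ hi)
      refine ⟨⟨(d, t.sum), ⟨t, fun hi => ht _ hi, rfl⟩⟩, ?_, ?_⟩
      · refine Finset.mem_sigma.mpr ⟨Finset.mem_filter.mpr ⟨Finset.HasAntidiagonal.mem_antidiagonal.mpr ?_, hd⟩,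
          Finset.mem_filter.mpr ⟨Finset.mem_univ _, ?_⟩⟩
        · have := c.blocks_sum; rw [hb] at this; simpa using this
        · simp only [Composition.length] at hlen ⊢
          rw [hb] at hlen; simpa using hlen
      · exact Composition.ext (by simp [hb])
    · -- values
      intro x hx
      simp


/-- The noncommutative Faà di Bruno formula of Brouder–Frabetti–Krattenthaler: over a
possibly noncommutative ring, for `f = Σ a(n) zⁿ` with `a 0 = 0`, the `n`-th coefficient
(`n ≥ 1`) of `Σ_{k=0}^{n} b(k) · f^k` is the sum over all compositions `(c₁,…,c_k)` of
`n` of the ordered product `b(k) · a(c₁) ⋯ a(c_k)`. -/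
theorem noncommutative_faa_di_bruno {R : Type*} [Ring R] (a b : ℕ → R) (ha : a 0 = 0)
    (n : ℕ) (hn : 1 ≤ n) :
    PowerSeries.coeff n
        (∑ k ∈ Finset.range (n + 1), PowerSeries.C (b k) * PowerSeries.mk a ^ k) =
      ∑ c : Composition n, b c.length * (c.blocks.map a).prod := by

  rw [map_sum]
  have h1 : ∀ k, PowerSeries.coeff n (PowerSeries.C (b k) * PowerSeries.mk a ^ k) =
      b k * PowerSeries.coeff n (PowerSeries.mk a ^ k) := by
    intro k
    rw [PowerSeries.coeff_C_mul]
  simp only [h1, coeff_mk_pow_eq a ha]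
  rw [← Finset.sum_fiberwise_of_maps_to (g := fun c : Composition n => c.length)
    (fun c _ => Finset.mem_range.mpr (Nat.lt_succ_of_le c.length_le))]
  refine Finset.sum_congr rfl fun k _ => ?_
  rw [Finset.mul_sum]
  refine Finset.sum_congr rfl fun c hc => ?_
  rw [(Finset.mem_filter.mp hc).2]
end

section
/- Let R be a commutative ring and let f and g be formal power series over R such that the constant coefficient of f is 0. Then for every natural number n, the n-th coefficient of subst f g (i.e. of g(f(z))) equals the sum, over all compositions c of n, of the (length of c)-th coefficient of g multiplied by the product, over the blocks cᵢ of c, of the cᵢ-th coefficient of f. -/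
open Finset

lemma coeff_pow_eq_sum_compositions {R : Type*} [CommRing R] (f : PowerSeries R)
    (hf : PowerSeries.constantCoeff f = 0) (n k : ℕ) :
    PowerSeries.coeff n (f ^ k) =
      ∑ c ∈ Finset.univ.filter (fun c : Composition n => c.length = k),
        (c.blocks.map fun i => PowerSeries.coeff i f).prod := by
  classical
  rw [PowerSeries.coeff_pow]
  rw [← Finset.sum_filter_of_ne (p := fun l : ℕ →₀ ℕ => ∀ i ∈ Finset.range k, l i ≠ 0)
    (hp := ?_)]
  · refine Finset.sum_bij'
      (i := fun (l : ℕ →₀ ℕ) (hl : l ∈ _) => Composition.mk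
        (List.ofFn fun i : Fin k => l i)
        (by
          intro x hx
          simp only [List.mem_ofFn] at hx
          obtain ⟨i, rfl⟩ := hx
          simp only [Finset.mem_filter, Finset.mem_finsuppAntidiag] at hl
          exact Nat.pos_of_ne_zero (hl.2 i (Finset.mem_range.mpr i.2)))
        (by
          simp only [Finset.mem_filter, Finset.mem_finsuppAntidiag] at hl
          rw [List.sum_ofFn, ← Finset.sum_range (fun i => l i)]
          exact hl.1.1))
      (j := fun (c : Composition n) (hc : c ∈ _) => Finsupp.onFinset (Finset.range k)
        (fun i => c.blocks.getD i 0)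
        (by
          intro i hi
          simp only [Finset.mem_filter, Finset.mem_univ, true_and] at hc
          by_contra h
          simp only [Finset.mem_range, not_lt] at h
          exact hi (List.getD_eq_default _ _ (by simpa [Composition.length, hc] using h))))
      ?_ ?_ ?_ ?_ ?_
    · intro l hl
      simp only [Finset.mem_filter, Finset.mem_univ, true_and]
      simp [Composition.length]
    · intro c hc
      simp only [Finset.mem_filter, Finset.mem_univ, true_and] at hc
      subst hc
      simp only [Finset.mem_filter, Finset.mem_finsuppAntidiag, Finsupp.onFinset_apply]
      refine ⟨⟨?_, Finsupp.support_onFinset_subset⟩, ?_⟩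
      · change ∑ i ∈ Finset.range c.length, c.blocks.getD i 0 = n
        rw [Finset.sum_range (fun i => c.blocks.getD i 0),
          show (∑ i : Fin c.length, c.blocks.getD (↑i) 0) = ∑ i, c.blocksFun i from
            Finset.sum_congr rfl fun i _ => by rw [List.getD_eq_getElem _ _ i.2]; rfl]
        exact c.sum_blocksFun
      · intro i hi
        rw [List.getD_eq_getElem _ _ (Finset.mem_range.mp hi)]
        exact (c.blocks_pos (List.getElem_mem _)).ne'
    · intro l hl
      simp only [Finset.mem_filter, Finset.mem_finsuppAntidiag] at hl
      ext m
      simp only [Finsupp.onFinset_apply]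
      by_cases hm : m < k
      · rw [List.getD_eq_getElem _ _ (by simp [hm])]
        simp
      · rw [List.getD_eq_default _ _ (by simp; omega)]
        by_contra h
        have := hl.1.2 (Finsupp.mem_support_iff.mpr (Ne.symm h))
        simp at this; omega
    · intro c hc
      simp only [Finset.mem_filter, Finset.mem_univ, true_and] at hc
      have hlen : c.blocks.length = k := hc
      ext1
      apply List.ext_getElem (by simp [hlen])
      intro i h1 h2
      simp only [List.getElem_ofFn, Finsupp.onFinset_apply]
      rw [List.getD_eq_getElem _ _ (by omega)]
    · intro l hl
      simp only [List.map_ofFn, List.prod_ofFn, Function.comp]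
      rw [← Finset.prod_range (fun i => PowerSeries.coeff (l i) f)]
  · intro l hl hne
    by_contra h
    push_neg at h
    obtain ⟨i, hi, hi0⟩ := h
    apply hne
    apply Finset.prod_eq_zero hi
    rw [hi0]
    simpa using hf

/-- The `n`-th coefficient of `g(f(z))` is the sum over all compositions `c` of `n`
of `g_{length c} · ∏ᵢ f_{cᵢ}`. -/
theorem faa_di_bruno_compositions {R : Type*} [CommRing R] (f g : PowerSeries R)
    (hf : PowerSeries.constantCoeff f = 0) (n : ℕ) :
    PowerSeries.coeff n (PowerSeries.subst' f g) =
      ∑ c : Composition n,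
        PowerSeries.coeff c.length g *
          (c.blocks.map fun i => PowerSeries.coeff i f).prod := by
  classical
  rw [PowerSeries.subst', PowerSeries.coeff_mk,
    ← Finset.sum_fiberwise_of_maps_to (g := fun c : Composition n => c.length)
      (fun c _ => Finset.mem_range.mpr (Nat.lt_succ_of_le c.length_le))]
  refine Finset.sum_congr rfl fun k _ => ?_
  rw [coeff_pow_eq_sum_compositions f hf n k, Finset.mul_sum]
  refine Finset.sum_congr rfl fun c hc => ?_
  simp only [Finset.mem_filter] at hc
  rw [hc.2]
end

section
/- Let R be a commutative ring and x : ℕ → R a function. Then for all natural numbers n and k, the sum, over all compositions c = (c₁,…,c_k) of n of length exactly k, of the integer multinomial coefficient n!/(c₁!⋯c_k!) times the product x(c₁)⋯x(c_k), equals k! times the sum, over all partitions π of the finite set Fin n with exactly k blocks, of the product over the blocks B of π of x(card B). (This identity relates the ordered, composition-indexed expansion of the k-th power of a series to the unordered, partition-indexed sum, and accounts for the symmetry factor k! in the Faà di Bruno formula Δ(A) = Σ_k A^k ⊗ A_k/k!.) -/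
open Finset

section Glue
variable {α ι : Type*} [DecidableEq ι] {β : ι → Type*} (f : α → ι)

lemma sigma_eq_cast {ι : Type*} {β : ι → Type*} (s : Σ i, β i) (j : ι) (h : s.1 = j) :
    s = ⟨j, cast (congrArg β h) s.2⟩ := by
  cases s; cases h; rfl

def glueEquiv : {e : α ≃ (Σ i, β i) // ∀ a, (e a).1 = f a} ≃ (∀ i, {a // f a = i} ≃ β i) where
  toFun := fun ⟨e, he⟩ i =>
    { toFun := fun a => cast (congrArg β ((he a.1).trans a.2)) (e a.1).2
      invFun := fun b => ⟨e.symm ⟨i, b⟩, by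
        have : (e (e.symm ⟨i, b⟩)).1 = f (e.symm ⟨i, b⟩) := he _
        rw [Equiv.apply_symm_apply] at this
        exact this.symm⟩
      left_inv := by
        rintro ⟨a, rfl⟩
        apply Subtype.ext
        show e.symm ⟨f a, _⟩ = a
        rw [← sigma_eq_cast (e a) (f a) (he a), e.symm_apply_apply]
      right_inv := by
        intro b
        have h : e (e.symm ⟨i, b⟩) = ⟨i, b⟩ := e.apply_symm_apply _
        rw [Sigma.ext_iff] at h
        obtain ⟨h1, h2⟩ := h
        exact eq_of_heq ((cast_heq _ _).trans h2) }
  invFun := fun F => ⟨(Equiv.sigmaFiberEquiv f).symm.trans (Equiv.sigmaCongrRight F),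
    fun a => rfl⟩
  left_inv := by
    rintro ⟨e, he⟩
    exact Subtype.ext (Equiv.ext fun a => (sigma_eq_cast (e a) (f a) (he a)).symm)
  right_inv := by
    intro F
    funext i
    ext ⟨a, rfl⟩
    simp [Equiv.sigmaFiberEquiv, Equiv.sigmaCongrRight]
    rfl

end Glue

section Count
variable {n k : ℕ}

/-- The fiber of `f` over `i` as a finset. -/
def fiberF (f : Fin n → Fin k) (i : Fin k) : Finset (Fin n) :=
  univ.filter (fun a => f a = i)

lemma card_fiberF (f : Fin n → Fin k) (i : Fin k) :
    (fiberF f i).card = Fintype.card {a // f a = i} := by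
  rw [Fintype.card_subtype]; rfl

lemma sum_card_fiberF (f : Fin n → Fin k) : ∑ i, (fiberF f i).card = n := by
  have := Finset.card_eq_sum_card_fiberwise
    (f := f) (s := univ) (t := univ) (fun a _ => mem_univ _)
  simp only [Finset.card_univ, Fintype.card_fin] at this
  conv_rhs => rw [this]
  rfl

lemma countA (c : Fin k → ℕ) (hc : ∑ i, c i = n) :
    ((univ : Finset (Fin n → Fin k)).filter
        (fun f => ∀ i, (fiberF f i).card = c i)).card * ∏ i, (c i).factorial
      = n.factorial := by
  classical
  symm
  have hcardT : Fintype.card (Fin n ≃ Σ i, Fin (c i)) = n.factorial := by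
    rw [Fintype.card_equiv (Fintype.equivOfCardEq (by simp [hc]))]
    simp
  have key : ∀ f : Fin n → Fin k,
      Fintype.card {e : Fin n ≃ Σ i, Fin (c i) // ∀ a, (e a).1 = f a}
        = if ∀ i, (fiberF f i).card = c i then ∏ i, (c i).factorial else 0 := by
    intro f
    rw [Fintype.card_congr (glueEquiv f), Fintype.card_pi]
    split_ifs with h
    · refine Finset.prod_congr rfl fun i _ => ?_
      have : Fintype.card {a // f a = i} = c i := by rw [← card_fiberF]; exact h i
      rw [Fintype.card_equiv (this ▸ Fintype.equivFin _), this]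
    · push_neg at h
      obtain ⟨i, hi⟩ := h
      refine Finset.prod_eq_zero (mem_univ i) ?_
      rw [Fintype.card_eq_zero_iff]
      constructor
      intro e
      exact hi (by rw [card_fiberF, Fintype.card_congr e, Fintype.card_fin])
  calc n.factorial
      = ∑ f : Fin n → Fin k,
          Fintype.card {e : Fin n ≃ Σ i, Fin (c i) // ∀ a, (e a).1 = f a} := by
        rw [← hcardT, ← Finset.card_univ, Finset.card_eq_sum_card_fiberwise
          (f := fun e : Fin n ≃ Σ i, Fin (c i) => fun a => (e a).1) (t := univ)
          (fun e _ => mem_univ _)]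
        refine Finset.sum_congr rfl fun f _ => ?_
        rw [Fintype.card_subtype]
        congr 1
        ext e
        simp [funext_iff]
    _ = _ := by
        simp only [key]
        rw [Finset.sum_ite, Finset.sum_const_zero, add_zero, Finset.sum_const, smul_eq_mul]

end Count

section LemB
variable {n k : ℕ}

def sizesList (f : Fin n → Fin k) : List ℕ := List.ofFn (fun i => (fiberF f i).card)

lemma fiberF_nonempty_of_surj {f : Fin n → Fin k} (hf : Function.Surjective f) (i : Fin k) :
    (fiberF f i).Nonempty := by
  obtain ⟨a, ha⟩ := hf i
  exact ⟨a, by simp [fiberF, ha]⟩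

lemma comp_exists {f : Fin n → Fin k} (hf : Function.Surjective f) :
    ∃ c : Composition n, c.length = k ∧ sizesList f = c.blocks := by
  refine ⟨⟨sizesList f, ?_, ?_⟩, ?_, rfl⟩
  · intro i hi
    rw [sizesList, List.mem_ofFn] at hi
    obtain ⟨j, rfl⟩ := hi
    exact Finset.card_pos.2 (fiberF_nonempty_of_surj hf j)
  · rw [sizesList, List.sum_ofFn, sum_card_fiberF]
  · simp [Composition.length, sizesList]

lemma surj_of_sizes {f : Fin n → Fin k} {c : Composition n} (h : sizesList f = c.blocks) :
    Function.Surjective f := by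
  intro i
  have hmem : (fiberF f i).card ∈ c.blocks := by
    rw [← h, sizesList, List.mem_ofFn]
    exact ⟨i, rfl⟩
  have hpos : 0 < (fiberF f i).card := c.blocks_pos hmem
  obtain ⟨a, ha⟩ := Finset.card_pos.1 hpos
  exact ⟨a, by simpa [fiberF] using ha⟩

lemma lemB {R : Type*} [CommRing R] (x : ℕ → R) :
    ∑ c ∈ Finset.univ.filter (fun c : Composition n => c.length = k),
        ((n.factorial / (c.blocks.map Nat.factorial).prod : ℕ) : R) *
          (c.blocks.map x).prod =
      ∑ f ∈ Finset.univ.filter (fun f : Fin n → Fin k => Function.Surjective f),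
        ∏ i, x (fiberF f i).card := by
  classical
  have hunion : (univ.filter (fun f : Fin n → Fin k => Function.Surjective f)) =
      (univ.filter (fun c : Composition n => c.length = k)).biUnion
        (fun c => univ.filter (fun f : Fin n → Fin k => sizesList f = c.blocks)) := by
    ext f
    simp only [mem_biUnion, mem_filter, mem_univ, true_and]
    constructor
    · intro hf
      obtain ⟨c, hc1, hc2⟩ := comp_exists hf
      exact ⟨c, hc1, hc2⟩
    · rintro ⟨c, _, h⟩
      exact surj_of_sizes h
  rw [hunion, Finset.sum_biUnion ?_]
  · refine Finset.sum_congr rfl fun c hc => ?_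
    have hlen : c.length = k := (mem_filter.1 hc).2
    have hlenb : c.blocks.length = k := hlen
    set d : Fin k → ℕ := fun i => c.blocks.get (Fin.cast hlenb.symm i) with hd
    have hblocks : c.blocks = List.ofFn d := by
      refine List.ext_getElem (by simp [hlenb]) fun i h1 h2 => ?_
      simp [hd]
    have hpred : ∀ f : Fin n → Fin k,
        (sizesList f = c.blocks) ↔ (∀ i, (fiberF f i).card = d i) := by
      intro f
      rw [hblocks, sizesList, List.ofFn_inj, funext_iff]
    have hsum : ∑ i, d i = n := by
      have := c.blocks_sum
      rw [hblocks, List.sum_ofFn] at this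
      exact this
    have hcount := countA d hsum
    have hfact : (c.blocks.map Nat.factorial).prod = ∏ i, (d i).factorial := by
      rw [hblocks, List.map_ofFn, List.prod_ofFn]; rfl
    have hsets : univ.filter (fun f : Fin n → Fin k => sizesList f = c.blocks)
        = univ.filter (fun f => ∀ i, (fiberF f i).card = d i) := by
      ext f; simp only [mem_filter, mem_univ, true_and, hpred]
    have hcard : n.factorial / (c.blocks.map Nat.factorial).prod =
        (univ.filter (fun f : Fin n → Fin k => sizesList f = c.blocks)).card := by
      rw [hfact, hsets]
      exact Nat.div_eq_of_eq_mul_left (Finset.prod_pos fun i _ => Nat.factorial_pos _)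
        hcount.symm
    have hterm : ∀ f ∈ univ.filter (fun f : Fin n → Fin k => sizesList f = c.blocks),
        (∏ i, x (fiberF f i).card) = (c.blocks.map x).prod := by
      intro f hf
      have h := (mem_filter.1 hf).2
      rw [← h, sizesList, List.map_ofFn, List.prod_ofFn]
      rfl
    rw [Finset.sum_congr rfl hterm, Finset.sum_const, hcard, nsmul_eq_mul]
  · intro c hc c' hc' hne
    simp only [Finset.disjoint_left, mem_filter, mem_univ, true_and]
    rintro f h1 h2
    exact hne (by ext1; rw [← h1, ← h2])

end LemB

section LemC
variable {n k : ℕ}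

instance kerDec (f : Fin n → Fin k) : DecidableRel (Setoid.ker f).r :=
  fun a b => decidable_of_iff (f a = f b) Iff.rfl

/-- The partition of `Fin n` into fibers of `f`. -/
def kerPart (f : Fin n → Fin k) : Finpartition (univ : Finset (Fin n)) :=
  Finpartition.ofSetoid (Setoid.ker f)

lemma kerPart_parts {f : Fin n → Fin k} (hf : Function.Surjective f) :
    (kerPart f).parts = univ.image (fiberF f) := by
  ext B
  simp only [kerPart, Finpartition.ofSetoid, Finpartition.ofSetSetoid, mem_image, mem_univ, true_and]
  constructor
  · rintro ⟨a, rfl⟩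
    exact ⟨f a, by ext b; simp [fiberF, eq_comm, Setoid.ker_def]⟩
  · rintro ⟨i, rfl⟩
    obtain ⟨a, rfl⟩ := hf i
    exact ⟨a, by ext b; simp [fiberF, eq_comm, Setoid.ker_def]⟩

lemma fiberF_injective {f : Fin n → Fin k} (hf : Function.Surjective f) :
    Function.Injective (fiberF f) := by
  intro i j hij
  obtain ⟨a, ha⟩ := fiberF_nonempty_of_surj hf i
  have ha' : a ∈ fiberF f j := hij ▸ ha
  simp only [fiberF, mem_filter] at ha ha'
  rw [← ha.2, ← ha'.2]

lemma kerPart_card_parts {f : Fin n → Fin k} (hf : Function.Surjective f) :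
    (kerPart f).parts.card = k := by
  rw [kerPart_parts hf, Finset.card_image_of_injective _ (fiberF_injective hf),
    Finset.card_univ, Fintype.card_fin]

lemma mem_fiberF {f : Fin n → Fin k} {a : Fin n} {i : Fin k} :
    a ∈ fiberF f i ↔ f a = i := by simp [fiberF]

lemma fiberF_mem_parts {f : Fin n → Fin k} (hf : Function.Surjective f) (i : Fin k) :
    fiberF f i ∈ (kerPart f).parts := by
  rw [kerPart_parts hf]
  exact mem_image_of_mem _ (mem_univ i)

/-- Surjections with fiber-partition `π` are equivalent to orderings of the parts of `π`. -/
noncomputable def surjPartEquiv (π : Finpartition (univ : Finset (Fin n)))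
    (hπ : π.parts.card = k) :
    {f : Fin n → Fin k // Function.Surjective f ∧ kerPart f = π} ≃
      (Fin k ≃ {B // B ∈ π.parts}) where
  toFun := fun ⟨f, hf, hp⟩ => Equiv.ofBijective
    (fun i => (⟨fiberF f i, hp ▸ fiberF_mem_parts hf i⟩ : {B // B ∈ π.parts}))
    (by
      rw [Fintype.bijective_iff_injective_and_card]
      constructor
      · intro i j hij
        exact fiberF_injective hf (congrArg Subtype.val hij)
      · rw [Fintype.card_coe, hπ, Fintype.card_fin])
  invFun := fun e =>
    ⟨fun a => e.symm ⟨π.part a, π.part_mem.2 (mem_univ a)⟩, by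
      have key : ∀ (a : Fin n) (i : Fin k),
          e.symm ⟨π.part a, π.part_mem.2 (mem_univ a)⟩ = i ↔ a ∈ (e i).1 := by
        intro a i
        rw [Equiv.symm_apply_eq]
        constructor
        · rintro h
          have : π.part a = (e i).1 := congrArg Subtype.val h
          rw [← this]
          exact π.mem_part (mem_univ a)
        · intro h
          exact Subtype.ext (π.part_eq_of_mem (e i).2 h)
      constructor
      · intro i
        obtain ⟨a, ha⟩ := π.nonempty_of_mem_parts (e i).2
        exact ⟨a, (key a i).2 ha⟩
      · apply Finpartition.ext
        have hsurj : Function.Surjective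
            (fun a => e.symm ⟨π.part a, π.part_mem.2 (mem_univ a)⟩) := by
          intro i
          obtain ⟨a, ha⟩ := π.nonempty_of_mem_parts (e i).2
          exact ⟨a, (key a i).2 ha⟩
        rw [kerPart_parts hsurj]
        ext B
        simp only [mem_image, mem_univ, true_and]
        constructor
        · rintro ⟨i, rfl⟩
          have : fiberF (fun a => e.symm ⟨π.part a, π.part_mem.2 (mem_univ a)⟩) i
              = (e i).1 := by
            ext a
            rw [mem_fiberF, key a i]
          rw [this]
          exact (e i).2
        · intro hB
          refine ⟨e.symm (⟨B, hB⟩ : {B // B ∈ π.parts}), ?_⟩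
          ext a
          rw [mem_fiberF, key a (e.symm (⟨B, hB⟩ : {B // B ∈ π.parts})), Equiv.apply_symm_apply]⟩
  left_inv := by
    rintro ⟨f, hf, hp⟩
    apply Subtype.ext
    funext a
    simp only
    rw [Equiv.symm_apply_eq]
    have hpart : π.part a = fiberF f (f a) :=
      π.part_eq_of_mem (hp ▸ fiberF_mem_parts hf (f a)) (by simp [mem_fiberF])
    exact Subtype.ext hpart
  right_inv := by
    intro e
    apply Equiv.ext
    intro i
    apply Subtype.ext
    show fiberF (fun a => e.symm ⟨π.part a, π.part_mem.2 (mem_univ a)⟩) i = (e i).1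
    ext a
    rw [mem_fiberF, Equiv.symm_apply_eq]
    constructor
    · rintro h
      have : π.part a = (e i).1 := congrArg Subtype.val h
      rw [← this]
      exact π.mem_part (mem_univ a)
    · intro h
      exact Subtype.ext (π.part_eq_of_mem (e i).2 h)

lemma lemC {R : Type*} [CommRing R] (x : ℕ → R) :
    ∑ f ∈ Finset.univ.filter (fun f : Fin n → Fin k => Function.Surjective f),
        ∏ i, x (fiberF f i).card =
      (k.factorial : R) *
        ∑ π ∈ Finset.univ.filter
            (fun π : Finpartition (Finset.univ : Finset (Fin n)) => π.parts.card = k),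
          ∏ B ∈ π.parts, x B.card := by
  classical
  rw [← Finset.sum_fiberwise_of_maps_to (g := kerPart)
    (t := Finset.univ.filter (fun π : Finpartition (Finset.univ : Finset (Fin n)) =>
      π.parts.card = k))
    (fun f hf => by
      simp only [mem_filter, mem_univ, true_and] at hf ⊢
      exact kerPart_card_parts hf)]
  rw [Finset.mul_sum]
  refine Finset.sum_congr rfl fun π hπ => ?_
  have hπk : π.parts.card = k := (mem_filter.1 hπ).2
  have hset : (univ.filter (fun f : Fin n → Fin k => Function.Surjective f)).filter
      (fun f => kerPart f = π)
      = univ.filter (fun f : Fin n → Fin k => Function.Surjective f ∧ kerPart f = π) := by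
    rw [Finset.filter_filter]
  rw [hset]
  have hterm : ∀ f ∈ univ.filter
      (fun f : Fin n → Fin k => Function.Surjective f ∧ kerPart f = π),
      (∏ i, x (fiberF f i).card) = ∏ B ∈ π.parts, x B.card := by
    intro f hf
    obtain ⟨hf1, hf2⟩ := (mem_filter.1 hf).2
    rw [← hf2, kerPart_parts hf1, Finset.prod_image
      (fun i _ j _ h => fiberF_injective hf1 h)]
  rw [Finset.sum_congr rfl hterm, Finset.sum_const, nsmul_eq_mul]
  congr 1
  have : (univ.filter (fun f : Fin n → Fin k =>
      Function.Surjective f ∧ kerPart f = π)).card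
      = Fintype.card {f : Fin n → Fin k // Function.Surjective f ∧ kerPart f = π} := by
    rw [Fintype.card_subtype]
  rw [this, Fintype.card_congr (surjPartEquiv π hπk), Fintype.card_equiv
    (Fintype.equivOfCardEq (by rw [Fintype.card_coe, hπk, Fintype.card_fin])).symm]
  simp

end LemC

/-- The composition-indexed (ordered) expansion equals `k!` times the partition-indexed
(unordered) one: for any `x : ℕ → R`,
`Σ_{c ⊨ n, length c = k} (n!/(c₁!⋯c_k!)) · x(c₁)⋯x(c_k)
  = k! · Σ_{π ⊢ Fin n, #blocks π = k} ∏_{B ∈ π} x(card B)`. -/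
theorem compositions_eq_factorial_mul_partitions {R : Type*} [CommRing R] (x : ℕ → R)
    (n k : ℕ) :
    ∑ c ∈ Finset.univ.filter (fun c : Composition n => c.length = k),
        ((n.factorial / (c.blocks.map Nat.factorial).prod : ℕ) : R) *
          (c.blocks.map x).prod =
      (k.factorial : R) *
        ∑ π ∈ Finset.univ.filter
            (fun π : Finpartition (Finset.univ : Finset (Fin n)) => π.parts.card = k),
          ∏ B ∈ π.parts, x B.card := by
  rw [lemB x, lemC x]
end
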